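/- Let t₀ > 0, ω* = π/t₀, b > 0, c > 0 and z > 0 satisfy b·(z/c + t₀/2) < 1. Then there exists exactly one ε₁ ∈ (0, t₀/2) such that sin(ω*ε₁) = b·(ε₁ + z/c). -/

import Mathlib

open Real Set

/-- Key concavity step: a root of `f` strictly between a root and a point
where `f` is positive would make `f` positive there. -/
private lemma key_concave (ω b d u v w : ℝ) (hω : 0 < ω)
    (hu0 : 0 ≤ u) (huv : u < v) (hvw : v < w) (hwπ : ω * w ≤ π)
    (hfu : Real.sin (ω * u) - b * (u + d) = 0)
    (hfw : 0 < Real.sin (ω * w) - b * (w + d)) :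
    0 < Real.sin (ω * v) - b * (v + d) := by
  have huw : u < w := huv.trans hvw
  set p : ℝ := (w - v) / (w - u) with hp
  set q : ℝ := (v - u) / (w - u) with hq
  have hwu : 0 < w - u := by linarith
  have hp0 : 0 < p := div_pos (by linarith) hwu
  have hq0 : 0 < q := div_pos (by linarith) hwu
  have hpq : p + q = 1 := by
    rw [hp, hq, ← add_div, div_eq_one_iff_eq (by linarith)]; ring
  have hv : p * u + q * w = v := by
    rw [hp, hq]; field_simp; ring
  have h1 : Real.sin (p • (ω * u) + q • (ω * w)) >
      p • Real.sin (ω * u) + q • Real.sin (ω * w) := by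
    refine strictConcaveOn_sin_Icc.2 ?_ ?_ ?_ hp0 hq0 hpq
    · exact ⟨mul_nonneg hω.le hu0, by nlinarith⟩
    · exact ⟨mul_nonneg hω.le (by linarith), hwπ⟩
    · intro hEq
      have : u = w := by
        have := mul_left_cancel₀ (ne_of_gt hω) hEq
        linarith
      linarith
  have h2 : p • (ω * u) + q • (ω * w) = ω * v := by
    simp only [smul_eq_mul]
    rw [← hv]; ring
  rw [h2] at h1
  simp only [smul_eq_mul] at h1
  have e1 : p * Real.sin (ω * u) = p * (b * (u + d)) := by
    rw [show Real.sin (ω * u) = b * (u + d) by linarith]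
  have e2 : 0 < q * (Real.sin (ω * w) - b * (w + d)) := mul_pos hq0 hfw
  have hbd : p * (b * (u + d)) + q * (b * (w + d)) = b * (v + d) := by
    linear_combination b * hv + b * d * hpq
  nlinarith [h1, e1, e2, hbd]

/-- If `b (z/c + t₀/2) < 1`, then there exists exactly one `ε₁ ∈ (0, t₀/2)`
such that `sin (ω₊ ε₁) = b (ε₁ + z/c)`, where `ω₊ = π/t₀`. -/
theorem stmt_9 (t₀ b c z : ℝ)
    (ht₀ : 0 < t₀) (hb : 0 < b) (hc : 0 < c) (hz : 0 < z)
    (h : b * (z / c + t₀ / 2) < 1) :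
    ∃! ε₁ : ℝ, ε₁ ∈ Set.Ioo 0 (t₀ / 2) ∧
      Real.sin (π / t₀ * ε₁) = b * (ε₁ + z / c) := by
  set w := t₀ / 2 with hw
  set ω := π / t₀ with hω
  set f : ℝ → ℝ := fun ε => Real.sin (ω * ε) - b * (ε + z / c) with hf
  have hπ := Real.pi_pos
  have hw0 : 0 < w := by positivity
  have hωpos : 0 < ω := by positivity
  have hωw : ω * w = π / 2 := by
    rw [hω, hw]; field_simp; try ring
  have hdz : 0 < z / c := by positivity
  have hf0 : f 0 < 0 := by
    simp only [hf, mul_zero, Real.sin_zero, zero_add]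
    nlinarith
  have hfw : 0 < f w := by
    simp only [hf]
    rw [hωw, Real.sin_pi_div_two]
    nlinarith
  have hcont : ContinuousOn f (Icc 0 w) := by
    apply Continuous.continuousOn; continuity
  obtain ⟨x, hx, hfx⟩ := intermediate_value_Ioo (le_of_lt hw0) hcont ⟨hf0, hfw⟩
  have hfx0 : f x = 0 := hfx
  have hroot : ∀ y ∈ Set.Ioo (0:ℝ) w, Real.sin (ω * y) = b * (y + z / c) → f y = 0 := by
    intro y _ hy
    simp only [hf]; linarith
  -- key: no two distinct roots
  have huniq : ∀ u v : ℝ, u ∈ Set.Ioo (0:ℝ) w → v ∈ Set.Ioo (0:ℝ) w →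
      f u = 0 → f v = 0 → u = v := by
    intro u v hu hv hfu hfv
    by_contra hne
    rcases lt_or_gt_of_ne hne with hlt | hlt
    · have := key_concave ω b (z / c) u v w hωpos hu.1.le hlt hv.2
        (by rw [hωw]; linarith) hfu hfw
      simp only [hf] at hfv; linarith [this]
    · have := key_concave ω b (z / c) v u w hωpos hv.1.le hlt hu.2
        (by rw [hωw]; linarith) hfv hfw
      simp only [hf] at hfu; linarith [this]
  refine ⟨x, ⟨hx, by simp only [hf] at hfx0; linarith⟩, ?_⟩
  intro y ⟨hy, hy2⟩
  exact huniq y x hy hx (hroot y hy hy2) hfx0
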